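/- Let T : ℝ^n → ℝ^n be a Shapley operator, let q ≥ 1 and 0 < γ < 1 be such that T^q is a γ-contraction in the Hilbert seminorm (‖T^q(x) − T^q(y)‖_H ≤ γ‖x − y‖_H for all x, y), let η ≥ 0, and let T̃ : ℝ^n → ℝ^n satisfy ‖T̃(x) − T(x)‖_∞ ≤ η for all x. Define R(x) = x − t(x)·e, x_k = (R∘T)^k(0) and x̃_k = (R∘T̃)^k(0). Then for every integer k ≥ 0, ‖x̃_{qk} − x_{qk}‖_H ≤ 2qη/(1 − γ). -/

import Mathlib

/-- Hilbert's seminorm `‖x‖_H = max_i x_i - min_i x_i` on `ℝ^n`. -/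
noncomputable def hilbertSeminorm {n : ℕ} (x : Fin n → ℝ) : ℝ :=
  (⨆ i, x i) - (⨅ i, x i)

section aux

variable {n : ℕ} [Nonempty (Fin n)]

private lemma bddA (x : Fin n → ℝ) : BddAbove (Set.range x) :=
  (Set.finite_range x).bddAbove

private lemma bddB (x : Fin n → ℝ) : BddBelow (Set.range x) :=
  (Set.finite_range x).bddBelow

private lemma sup_add' (x : Fin n → ℝ) (c : ℝ) :
    (⨆ i, x i + c) = (⨆ i, x i) + c := by
  apply le_antisymm
  · exact ciSup_le fun i => add_le_add_left (le_ciSup (bddA x) i) c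
  · have h : (⨆ i, x i) ≤ (⨆ i, x i + c) - c :=
      ciSup_le fun i => le_sub_iff_add_le.mpr (le_ciSup (bddA fun i => x i + c) i)
    linarith

private lemma inf_add' (x : Fin n → ℝ) (c : ℝ) :
    (⨅ i, x i + c) = (⨅ i, x i) + c := by
  apply le_antisymm
  · have h : (⨅ i, x i + c) - c ≤ (⨅ i, x i) :=
      le_ciInf fun i => sub_le_iff_le_add.mpr (ciInf_le (bddB fun i => x i + c) i)
    linarith
  · exact le_ciInf fun i => add_le_add_left (ciInf_le (bddB x) i) c

private lemma hs_shift (x : Fin n → ℝ) (c : ℝ) :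
    hilbertSeminorm (fun i => x i + c) = hilbertSeminorm x := by
  unfold hilbertSeminorm
  rw [sup_add', inf_add']
  ring

private lemma hs_triangle (x y z : Fin n → ℝ) :
    hilbertSeminorm (x - z) ≤ hilbertSeminorm (x - y) + hilbertSeminorm (y - z) := by
  have h1 : (⨆ i, (x - z) i) ≤ (⨆ i, (x - y) i) + (⨆ i, (y - z) i) := by
    apply ciSup_le
    intro i
    have a : x i - y i ≤ ⨆ i, (x - y) i := le_ciSup (bddA (x - y)) i
    have b : y i - z i ≤ ⨆ i, (y - z) i := le_ciSup (bddA (y - z)) i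
    show x i - z i ≤ _
    linarith
  have h2 : (⨅ i, (x - y) i) + (⨅ i, (y - z) i) ≤ ⨅ i, (x - z) i := by
    apply le_ciInf
    intro i
    have a : (⨅ i, (x - y) i) ≤ x i - y i := ciInf_le (bddB (x - y)) i
    have b : (⨅ i, (y - z) i) ≤ y i - z i := ciInf_le (bddB (y - z)) i
    show _ ≤ x i - z i
    linarith
  unfold hilbertSeminorm
  linarith

private lemma hs_le_two_norm (x : Fin n → ℝ) : hilbertSeminorm x ≤ 2 * ‖x‖ := by
  have h1 : (⨆ i, x i) ≤ ‖x‖ := by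
    apply ciSup_le
    intro i
    have := norm_le_pi_norm x i
    rw [Real.norm_eq_abs] at this
    exact (le_abs_self _).trans this
  have h2 : -‖x‖ ≤ ⨅ i, x i := by
    apply le_ciInf
    intro i
    have h := norm_le_pi_norm x i
    rw [Real.norm_eq_abs] at h
    have := neg_abs_le (x i)
    linarith
  unfold hilbertSeminorm
  linarith

private lemma nonexp (S : (Fin n → ℝ) → (Fin n → ℝ)) (hm : Monotone S)
    (hh : ∀ (x : Fin n → ℝ) (c : ℝ), S (fun i => x i + c) = fun i => S x i + c)
    (x y : Fin n → ℝ) :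
    hilbertSeminorm (S x - S y) ≤ hilbertSeminorm (x - y) := by
  set M := ⨆ i, (x - y) i with hM
  set m := ⨅ i, (x - y) i with hm'
  have hxle : x ≤ fun i => y i + M := by
    rw [Pi.le_def]
    intro i
    have h : x i - y i ≤ M := le_ciSup (bddA (x - y)) i
    show x i ≤ y i + M
    linarith
  have hylex : (fun i => y i + m) ≤ x := by
    rw [Pi.le_def]
    intro i
    have h : m ≤ x i - y i := ciInf_le (bddB (x - y)) i
    show y i + m ≤ x i
    linarith
  have h1 : S x ≤ fun i => S y i + M := by
    have := hm hxle
    rwa [hh y M] at this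
  have h2 : (fun i => S y i + m) ≤ S x := by
    have := hm hylex
    rwa [hh y m] at this
  have hsup : (⨆ i, (S x - S y) i) ≤ M := by
    apply ciSup_le
    intro i
    have h : S x i ≤ S y i + M := h1 i
    show S x i - S y i ≤ M
    linarith
  have hinf : m ≤ ⨅ i, (S x - S y) i := by
    apply le_ciInf
    intro i
    have h : S y i + m ≤ S x i := h2 i
    show m ≤ S x i - S y i
    linarith
  unfold hilbertSeminorm
  linarith

private lemma iter_hom (S : (Fin n → ℝ) → (Fin n → ℝ))
    (hh : ∀ (x : Fin n → ℝ) (c : ℝ), S (fun i => x i + c) = fun i => S x i + c) :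
    ∀ (j : ℕ) (x : Fin n → ℝ) (c : ℝ),
      S^[j] (fun i => x i + c) = fun i => S^[j] x i + c := by
  intro j
  induction j with
  | zero => intro x c; simp
  | succ j ih =>
    intro x c
    rw [Function.iterate_succ_apply, Function.iterate_succ_apply, hh, ih]

end aux

/-- Stability of relative value iteration under approximate oracles: if `T^q`
is a `γ`-contraction in Hilbert's seminorm and `T̃` is an `η`-approximation of
`T` in the sup-norm, then the exact and approximate relative value iterations
started at `0` satisfy `‖x̃_{qk} - x_{qk}‖_H ≤ 2qη/(1-γ)` for all `k`. -/
theorem approximate_iteration_bound {n : ℕ} (hn : 0 < n)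
    (T : (Fin n → ℝ) → (Fin n → ℝ))
    (hmono : Monotone T)
    (hhom : ∀ (x : Fin n → ℝ) (c : ℝ), T (fun i => x i + c) = fun i => T x i + c)
    (q : ℕ) (hq : 1 ≤ q) (γ : ℝ) (hγ0 : 0 < γ) (hγ1 : γ < 1)
    (hcontr : ∀ x y : Fin n → ℝ,
      hilbertSeminorm (T^[q] x - T^[q] y) ≤ γ * hilbertSeminorm (x - y))
    (η : ℝ) (hη : 0 ≤ η)
    (Ttil : (Fin n → ℝ) → (Fin n → ℝ))
    (hTtil : ∀ x : Fin n → ℝ, ‖Ttil x - T x‖ ≤ η)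
    (R : (Fin n → ℝ) → (Fin n → ℝ))
    (hR : R = fun x => fun i => x i - ⨆ j, x j) :
    ∀ k : ℕ,
      hilbertSeminorm ((R ∘ Ttil)^[q * k] 0 - (R ∘ T)^[q * k] 0) ≤
        2 * q * η / (1 - γ) := by
  haveI : Nonempty (Fin n) := ⟨⟨0, hn⟩⟩
  have hγ' : (0:ℝ) < 1 - γ := by linarith
  have hBnn : (0:ℝ) ≤ 2 * q * η / (1 - γ) := by
    apply div_nonneg _ hγ'.le
    positivity
  have iterT := iter_hom T hhom
  have nexp : ∀ (j : ℕ) (x y : Fin n → ℝ),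
      hilbertSeminorm (T^[j] x - T^[j] y) ≤ hilbertSeminorm (x - y) :=
    fun j x y => nonexp (T^[j]) (hmono.iterate j) (fun x c => iterT j x c) x y
  have hRw : ∀ (j : ℕ) (w : Fin n → ℝ),
      T^[j] (R w) = fun i => T^[j] w i + (-(⨆ l, w l)) := by
    intro j w
    have h : R w = fun i => w i + (-(⨆ l, w l)) := by
      rw [hR]; funext i; ring
    rw [h, iterT]
  have key : ∀ (j : ℕ) (u v : Fin n → ℝ),
      hilbertSeminorm ((R ∘ Ttil)^[j] u - (R ∘ T)^[j] v) ≤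
        2 * j * η + hilbertSeminorm (T^[j] u - T^[j] v) := by
    intro j
    induction j with
    | zero => intro u v; simp
    | succ j ih =>
      intro u v
      rw [Function.iterate_succ_apply, Function.iterate_succ_apply]
      simp only [Function.comp_apply]
      have h0 := ih (R (Ttil u)) (R (T v))
      have hshift : hilbertSeminorm (T^[j] (R (Ttil u)) - T^[j] (R (T v))) =
          hilbertSeminorm (T^[j] (Ttil u) - T^[j] (T v)) := by
        rw [hRw j (Ttil u), hRw j (T v)]
        have h : ((fun i => T^[j] (Ttil u) i + (-(⨆ l, Ttil u l))) -
              fun i => T^[j] (T v) i + (-(⨆ l, T v l)))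
            = fun i => (T^[j] (Ttil u) - T^[j] (T v)) i
                + ((⨆ l, T v l) - (⨆ l, Ttil u l)) := by
          funext i
          simp only [Pi.sub_apply]
          ring
        rw [h, hs_shift]
      rw [hshift] at h0
      have htri := hs_triangle (T^[j] (Ttil u)) (T^[j] (T u)) (T^[j] (T v))
      have hne1 : hilbertSeminorm (T^[j] (Ttil u) - T^[j] (T u)) ≤ 2 * η :=
        calc hilbertSeminorm (T^[j] (Ttil u) - T^[j] (T u))
            ≤ hilbertSeminorm (Ttil u - T u) := nexp j _ _
          _ ≤ 2 * ‖Ttil u - T u‖ := hs_le_two_norm _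
          _ ≤ 2 * η := by linarith [hTtil u]
      have hne2 : hilbertSeminorm (T^[j] (T u) - T^[j] (T v)) =
          hilbertSeminorm (T^[j+1] u - T^[j+1] v) := by
        rw [Function.iterate_succ_apply, Function.iterate_succ_apply]
      rw [hne2] at htri
      push_cast
      linarith
  intro k
  induction k with
  | zero =>
    simpa [hilbertSeminorm] using hBnn
  | succ k ih =>
    have hqk : q * (k + 1) = q + q * k := by ring
    rw [hqk, Function.iterate_add_apply, Function.iterate_add_apply]
    have h0 := key q ((R ∘ Ttil)^[q * k] 0) ((R ∘ T)^[q * k] 0)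
    have hc := hcontr ((R ∘ Ttil)^[q * k] 0) ((R ∘ T)^[q * k] 0)
    have hmul : γ * hilbertSeminorm ((R ∘ Ttil)^[q * k] 0 - (R ∘ T)^[q * k] 0)
        ≤ γ * (2 * q * η / (1 - γ)) := mul_le_mul_of_nonneg_left ih hγ0.le
    have h1γ : (1:ℝ) - γ ≠ 0 := ne_of_gt hγ'
    have harith : 2 * (q:ℝ) * η + γ * (2 * q * η / (1 - γ)) = 2 * q * η / (1 - γ) := by
      field_simp
      ring
    linarith
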